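/- For every natural number k ≥ 2, every finite unit-distance graph G = (V,E) with E nonempty, and every asymptotic k-coloring c of the plane, one has m_k(G) ≤ p(c). (Left-hand inequality of Theorem 2.) -/

import Mathlib

open MeasureTheory Real

noncomputable section

abbrev Plane := EuclideanSpace ℝ (Fin 2)

def vec (x y : ℝ) : Plane := (WithLp.equiv 2 (Fin 2 → ℝ)).symm ![x, y]

def dir (θ : ℝ) : Plane := vec (Real.cos θ) (Real.sin θ)

/-- The fundamental parallelogram `{t•u + s•v : 0 ≤ t, s < 1}`. -/
def para (u v : Plane) : Set Plane :=
  {x | ∃ t s : ℝ, 0 ≤ t ∧ t < 1 ∧ 0 ≤ s ∧ s < 1 ∧ x = t • u + s • v}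

/-- `p^per(c)` for a periodic coloring with fundamental parallelogram `para u v`. -/
def pper {k : ℕ} (c : Plane → Fin k) (u v : Plane) : ℝ :=
  (1 / (2 * π * (volume (para u v)).toReal)) *
    ∫ a in para u v, ∫ θ in (0:ℝ)..(2*π),
      (if c a = c (a + dir θ) then (1:ℝ) else 0)

/-- The square `[-R, R]²`. -/
def square (R : ℝ) : Set Plane := {x | x 0 ∈ Set.Icc (-R) R ∧ x 1 ∈ Set.Icc (-R) R}

-- `p^table(c)` on the "table" `P`: the conditional probability that both endpoints of a
-- random needle have the same color, given that the second endpoint also lands in `P`.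
open Classical in
def ptableSet {k : ℕ} (c : Plane → Fin k) (P : Set Plane) : ℝ :=
  (∫ a in P, ∫ θ in (0:ℝ)..(2*π),
      (if c a = c (a + dir θ) ∧ a + dir θ ∈ P then (1:ℝ) else 0)) /
  (∫ a in P, ∫ θ in (0:ℝ)..(2*π), (if a + dir θ ∈ P then (1:ℝ) else 0))

/-- `p^table_R(c)`, on the square table `[-R, R]²`. -/
def ptable {k : ℕ} (c : Plane → Fin k) (R : ℝ) : ℝ := ptableSet c (square R)

-- Number of monochromatic edges of `G` under the vertex coloring `χ`.
open Classical in
def monoCount {V : Type} [Fintype V] {k : ℕ} (G : SimpleGraph V) (χ : V → Fin k) : ℕ :=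
  (G.edgeFinset.filter fun e => (e.map χ).IsDiag).card

-- `m_k(G)`: the least fraction of monochromatic edges over all `k`-colorings of `G`.
open Classical in
def mval {V : Type} [Fintype V] (k : ℕ) (G : SimpleGraph V) : ℝ :=
  ⨅ χ : V → Fin k, (monoCount G χ : ℝ) / (G.edgeFinset.card : ℝ)


lemma vec_apply0 (x y : ℝ) : vec x y 0 = x := by
  simp [vec]
lemma vec_apply1 (x y : ℝ) : vec x y 1 = y := by
  simp [vec]

lemma continuous_vec2 {f g : ℝ → ℝ} (hf : Continuous f) (hg : Continuous g) :
    Continuous (fun θ => vec (f θ) (g θ)) := by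
  apply Continuous.comp (PiLp.continuous_toLp 2 (fun _ : Fin 2 => ℝ))
  apply continuous_pi
  intro i
  fin_cases i <;> simpa

lemma continuous_dir : Continuous dir := continuous_vec2 continuous_cos continuous_sin

lemma plane_add_apply (a b : Plane) (i : Fin 2) : (a + b) i = a i + b i := rfl

lemma measurableSet_square (R : ℝ) : MeasurableSet (square R) := by
  have h0 : Continuous (fun x : Plane => x 0) := by
    exact (continuous_apply 0).comp (PiLp.continuous_ofLp 2 (fun _ : Fin 2 => ℝ))
  have h1 : Continuous (fun x : Plane => x 1) := by
    exact (continuous_apply 1).comp (PiLp.continuous_ofLp 2 (fun _ : Fin 2 => ℝ))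
  exact ((h0.measurable measurableSet_Icc).inter (h1.measurable measurableSet_Icc))

lemma volume_square {R : ℝ} :
    volume (square R) = ENNReal.ofReal (2*R) * ENNReal.ofReal (2*R) := by
  have : square R = (MeasurableEquiv.toLp 2 (Fin 2 → ℝ)).symm ⁻¹'
      (Set.univ.pi fun _ : Fin 2 => Set.Icc (-R) R) := by
    ext x
    simp only [square, Set.mem_setOf_eq, Set.mem_preimage, Set.mem_pi, Set.mem_univ,
      forall_true_left, Fin.forall_fin_two]
    rfl
  rw [this, (EuclideanSpace.volume_preserving_symm_measurableEquiv_toLp (Fin 2)).measure_preimage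
    ((MeasurableSet.univ_pi fun _ => measurableSet_Icc).nullMeasurableSet)]
  rw [volume_pi_pi]
  rw [Fin.prod_univ_two]
  rw [Real.volume_Icc]
  norm_num
  ring_nf
  rw [mul_comm R 2, ENNReal.ofReal_mul (by norm_num), mul_pow, mul_comm]
  norm_num
noncomputable section B
def rot (θ : ℝ) (x : Plane) : Plane :=
  vec (Real.cos θ * x 0 - Real.sin θ * x 1) (Real.sin θ * x 0 + Real.cos θ * x 1)

lemma plane_ext {a b : Plane} (h0 : a 0 = b 0) (h1 : a 1 = b 1) : a = b := by
  ext i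
  fin_cases i <;> assumption

lemma rot_add (θ : ℝ) (x y : Plane) : rot θ (x + y) = rot θ x + rot θ y := by
  apply plane_ext <;>
    simp [rot, vec_apply0, vec_apply1, add_apply] <;> ring

lemma rot_dir (θ ψ : ℝ) : rot θ (dir ψ) = dir (θ + ψ) := by
  apply plane_ext <;>
    simp [rot, dir, vec_apply0, vec_apply1, Real.cos_add, Real.sin_add] <;> ring

lemma abs_rot_apply (θ : ℝ) (x : Plane) (i : Fin 2) :
    |rot θ x i| ≤ |x 0| + |x 1| := by
  fin_cases i <;> simp only [rot, vec_apply0, vec_apply1]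
  · calc |Real.cos θ * x 0 - Real.sin θ * x 1| ≤ |Real.cos θ * x 0| + |Real.sin θ * x 1| :=
        abs_sub _ _
    _ ≤ |x 0| + |x 1| := by
        rw [abs_mul, abs_mul]
        nlinarith [Real.abs_cos_le_one θ, Real.abs_sin_le_one θ, abs_nonneg (x 0),
          abs_nonneg (x 1), abs_nonneg (Real.cos θ), abs_nonneg (Real.sin θ)]
  · calc |Real.sin θ * x 0 + Real.cos θ * x 1| ≤ |Real.sin θ * x 0| + |Real.cos θ * x 1| :=
        abs_add_le _ _
    _ ≤ |x 0| + |x 1| := by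
        rw [abs_mul, abs_mul]
        nlinarith [Real.abs_cos_le_one θ, Real.abs_sin_le_one θ, abs_nonneg (x 0),
          abs_nonneg (x 1), abs_nonneg (Real.cos θ), abs_nonneg (Real.sin θ)]

lemma abs_dir_apply (θ : ℝ) (i : Fin 2) : |dir θ i| ≤ 1 := by
  fin_cases i <;> simp only [dir, vec_apply0, vec_apply1]
  · exact Real.abs_cos_le_one θ
  · exact Real.abs_sin_le_one θ

lemma continuous_rot (x : Plane) : Continuous (fun θ => rot θ x) := by
  exact continuous_vec2 (by fun_prop) (by fun_prop)

lemma dir_periodic : Function.Periodic dir (2 * π) := by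
  intro θ
  simp [dir, Real.cos_add_two_pi, Real.sin_add_two_pi]

/-- existence of an angle for a unit vector -/
lemma exists_angle {u : Plane} (hu : ‖u‖ = 1) : ∃ φ, dir φ = u := by
  have hsum : u 0 ^ 2 + u 1 ^ 2 = 1 := by
    have := congrArg (· ^ 2) hu
    rw [EuclideanSpace.norm_eq] at this
    simp only [one_pow] at this
    rw [Real.sq_sqrt (by positivity)] at this
    rw [← this, Fin.sum_univ_two]
    simp [sq_abs]
  have h0 : u 0 ∈ Set.Icc (-1 : ℝ) 1 := by
    constructor <;> nlinarith [sq_nonneg (u 1)]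
  rcases le_or_gt 0 (u 1) with h | h
  · refine ⟨Real.arccos (u 0), plane_ext ?_ ?_⟩
    · simp [dir, vec_apply0, Real.cos_arccos h0.1 h0.2]
    · simp only [dir, vec_apply1, Real.sin_arccos]
      rw [show (1:ℝ) - u 0 ^ 2 = u 1 ^ 2 by linarith]
      exact Real.sqrt_sq h
  · refine ⟨-Real.arccos (u 0), plane_ext ?_ ?_⟩
    · simp [dir, vec_apply0, Real.cos_arccos h0.1 h0.2]
    · simp only [dir, vec_apply1, Real.sin_neg, Real.sin_arccos]
      rw [show (1:ℝ) - u 0 ^ 2 = u 1 ^ 2 by linarith]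
      rw [show u 1 ^ 2 = (-u 1) ^ 2 by ring, Real.sqrt_sq (by linarith)]
      ring
end B
noncomputable section C
open Classical in
def ind (P : Prop) : ℝ := if P then 1 else 0

lemma ind_nonneg (P : Prop) : 0 ≤ ind P := by unfold ind; split <;> norm_num
lemma ind_le_one (P : Prop) : ind P ≤ 1 := by unfold ind; split <;> norm_num
lemma ind_mul_ind (P Q : Prop) : ind P * ind Q = ind (P ∧ Q) := by
  unfold ind; by_cases hP : P <;> by_cases hQ : Q <;> simp [hP, hQ]
lemma ind_true {P : Prop} (h : P) : ind P = 1 := by simp [ind, h]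
lemma ind_congr {P Q : Prop} (h : P ↔ Q) : ind P = ind Q := by
  unfold ind
  by_cases hP : P
  · simp [hP, h.1 hP]
  · have hQ : ¬Q := fun q => hP (h.2 q)
    simp [hP, hQ]
lemma ind_mono {P Q : Prop} (h : P → Q) : ind P ≤ ind Q := by
  by_cases hP : P
  · rw [ind_true hP, ind_true (h hP)]
  · calc ind P = 0 := by simp [ind, hP]
      _ ≤ ind Q := ind_nonneg Q
lemma indicator_eq_ind (s : Set α) (x : α) :
    Set.indicator s (fun _ => (1:ℝ)) x = ind (x ∈ s) := by
  by_cases h : x ∈ s <;> simp [h, ind]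
lemma indicator_mul_eq (s : Set α) (h : α → ℝ) (x : α) :
    Set.indicator s h x = ind (x ∈ s) * h x := by
  by_cases hx : x ∈ s <;> simp [hx, ind]

lemma volume_square_lt_top (S : ℝ) : volume (square S) < ⊤ := by
  rw [volume_square]; exact ENNReal.mul_lt_top ENNReal.ofReal_lt_top ENNReal.ofReal_lt_top

lemma integrable_ind {P : Plane × ℝ → Prop} (hm : MeasurableSet {z | P z}) (S a b : ℝ)
    (hsub : ∀ z, P z → z.1 ∈ square S ∧ z.2 ∈ Set.Icc a b) :
    Integrable (fun z => ind (P z)) ((volume : Measure Plane).prod (volume : Measure ℝ)) := by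
  have heq : (fun z => ind (P z)) = Set.indicator {z | P z} (fun _ => (1:ℝ)) := by
    funext z; rw [indicator_eq_ind]; rfl
  rw [heq, integrable_indicator_iff hm]
  apply Measure.integrableOn_of_bounded (M := 1)
  · apply ne_of_lt
    calc ((volume : Measure Plane).prod volume) {z | P z}
        ≤ ((volume : Measure Plane).prod volume) (square S ×ˢ Set.Icc a b) := by
          apply measure_mono; intro z hz; exact hsub z hz
      _ = volume (square S) * volume (Set.Icc a b) := by
          rw [Measure.prod_prod]
      _ < ⊤ := ENNReal.mul_lt_top (volume_square_lt_top S)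
          (by rw [Real.volume_Icc]; exact ENNReal.ofReal_lt_top)
  · exact aestronglyMeasurable_const
  · filter_upwards with z; simp

lemma integral_ind_box (A : Set Plane) (hA : MeasurableSet A) {a b : ℝ} (hab : a ≤ b) :
    (∫ z : Plane × ℝ, ind (z.1 ∈ A ∧ z.2 ∈ Set.Ioc a b)
        ∂((volume : Measure Plane).prod volume))
      = (volume A).toReal * (b - a) := by
  have heq : (fun z : Plane × ℝ => ind (z.1 ∈ A ∧ z.2 ∈ Set.Ioc a b))
      = Set.indicator (A ×ˢ Set.Ioc a b) (fun _ => (1:ℝ)) := by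
    funext z
    rw [indicator_eq_ind]
    exact ind_congr (by simp [Set.mem_prod])
  rw [heq, MeasureTheory.integral_indicator_const _ (hA.prod measurableSet_Ioc)]
  rw [measureReal_def, Measure.prod_prod, Real.volume_Ioc, smul_eq_mul, mul_one, ENNReal.toReal_mul,
    ENNReal.toReal_ofReal (by linarith)]
end C
noncomputable section D
variable {k : ℕ} {c : Plane → Fin k}

lemma continuous_coord (i : Fin 2) : Continuous (fun x : Plane => x i) :=
  (continuous_apply i).comp (PiLp.continuous_ofLp 2 (fun _ : Fin 2 => ℝ))

lemma mem_square_iff {x : Plane} {S : ℝ} : x ∈ square S ↔ |x 0| ≤ S ∧ |x 1| ≤ S := by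
  simp [square, Set.mem_Icc, abs_le]

lemma measurableSet_colorEq (hc : Measurable c) {α : Type*} [MeasurableSpace α]
    {g₁ g₂ : α → Plane} (h₁ : Measurable g₁) (h₂ : Measurable g₂) :
    MeasurableSet {z | c (g₁ z) = c (g₂ z)} :=
  measurableSet_eq_fun (hc.comp h₁) (hc.comp h₂)

lemma measurable_m1 : Measurable (fun z : Plane × ℝ => z.1 + dir z.2) :=
  (continuous_fst.add (continuous_dir.comp continuous_snd)).measurable

lemma measurable_m2 (v : Plane) : Measurable (fun z : Plane × ℝ => z.1 + rot z.2 v) :=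
  (continuous_fst.add ((continuous_rot v).comp continuous_snd)).measurable

lemma measurable_m3 (v : Plane) (φ : ℝ) :
    Measurable (fun z : Plane × ℝ => z.1 + rot z.2 v + dir (z.2 + φ)) :=
  ((continuous_fst.add ((continuous_rot v).comp continuous_snd)).add
    (continuous_dir.comp (continuous_snd.add continuous_const))).measurable

def Nfull (c : Plane → Fin k) (S : ℝ) : ℝ :=
  ∫ z : Plane × ℝ, ind (z.2 ∈ Set.Ioc 0 (2*π) ∧ z.1 ∈ square S ∧
      c z.1 = c (z.1 + dir z.2) ∧ z.1 + dir z.2 ∈ square S)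
    ∂((volume : Measure Plane).prod volume)

def Dfull (c : Plane → Fin k) (S : ℝ) : ℝ :=
  ∫ z : Plane × ℝ, ind (z.2 ∈ Set.Ioc 0 (2*π) ∧ z.1 ∈ square S ∧
      z.1 + dir z.2 ∈ square S)
    ∂((volume : Measure Plane).prod volume)

lemma measurableSet_Nset (hc : Measurable c) (S : ℝ) :
    MeasurableSet {z : Plane × ℝ | z.2 ∈ Set.Ioc 0 (2*π) ∧ z.1 ∈ square S ∧
      c z.1 = c (z.1 + dir z.2) ∧ z.1 + dir z.2 ∈ square S} := by
  apply MeasurableSet.inter (measurable_snd measurableSet_Ioc)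
  apply MeasurableSet.inter (measurable_fst (measurableSet_square S))
  exact (measurableSet_colorEq hc measurable_fst measurable_m1).inter
    (measurable_m1 (measurableSet_square S))

lemma measurableSet_Dset (hc : Measurable c) (S : ℝ) :
    MeasurableSet {z : Plane × ℝ | z.2 ∈ Set.Ioc 0 (2*π) ∧ z.1 ∈ square S ∧
      z.1 + dir z.2 ∈ square S} := by
  apply MeasurableSet.inter (measurable_snd measurableSet_Ioc)
  exact (measurable_fst (measurableSet_square S)).inter
    (measurable_m1 (measurableSet_square S))

lemma integrable_Nfull (hc : Measurable c) (S : ℝ) :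
    Integrable (fun z : Plane × ℝ => ind (z.2 ∈ Set.Ioc 0 (2*π) ∧ z.1 ∈ square S ∧
      c z.1 = c (z.1 + dir z.2) ∧ z.1 + dir z.2 ∈ square S))
      ((volume : Measure Plane).prod volume) := by
  apply integrable_ind (measurableSet_Nset hc S) S 0 (2*π)
  rintro z ⟨h1, h2, -⟩
  exact ⟨h2, Set.Ioc_subset_Icc_self h1⟩

lemma integrable_Dfull (hc : Measurable c) (S : ℝ) :
    Integrable (fun z : Plane × ℝ => ind (z.2 ∈ Set.Ioc 0 (2*π) ∧ z.1 ∈ square S ∧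
      z.1 + dir z.2 ∈ square S))
      ((volume : Measure Plane).prod volume) := by
  apply integrable_ind (measurableSet_Dset hc S) S 0 (2*π)
  rintro z ⟨h1, h2, -⟩
  exact ⟨h2, Set.Ioc_subset_Icc_self h1⟩

lemma integrable_box (A : Set Plane) (hA : MeasurableSet A) (S : ℝ) (hAS : A ⊆ square S)
    (a b : ℝ) :
    Integrable (fun z : Plane × ℝ => ind (z.1 ∈ A ∧ z.2 ∈ Set.Ioc a b))
      ((volume : Measure Plane).prod volume) := by
  apply integrable_ind (((measurable_fst hA)).inter (measurable_snd measurableSet_Ioc)) S a b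
  rintro z ⟨h1, h2⟩
  exact ⟨hAS h1, Set.Ioc_subset_Icc_self h2⟩

lemma vol_square_toReal {S : ℝ} (hS : 0 ≤ S) : (volume (square S)).toReal = 4 * S^2 := by
  rw [volume_square, ← ENNReal.ofReal_mul (by linarith), ENNReal.toReal_ofReal (by nlinarith)]
  ring

lemma Nfull_nonneg (S : ℝ) : 0 ≤ Nfull c S :=
  integral_nonneg fun z => ind_nonneg _

lemma Dfull_nonneg (S : ℝ) : 0 ≤ Dfull c S :=
  integral_nonneg fun z => ind_nonneg _

lemma Dfull_le (hc : Measurable c) {S : ℝ} (hS : 0 ≤ S) : Dfull c S ≤ 4*S^2 * (2*π) := by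
  have h := integral_mono (integrable_Dfull hc S)
    (integrable_box (square S) (measurableSet_square S) S (fun _ h => h) 0 (2*π))
    (fun z => ind_mono (fun h => ⟨h.2.1, h.1⟩))
  rw [integral_ind_box (square S) (measurableSet_square S) (by positivity)] at h
  calc Dfull c S ≤ (volume (square S)).toReal * (2*π - 0) := h
    _ = 4*S^2 * (2*π) := by rw [vol_square_toReal hS]; ring

lemma Dfull_ge (hc : Measurable c) {S : ℝ} (hS : 1 ≤ S) : 4*(S-1)^2 * (2*π) ≤ Dfull c S := by
  have h := integral_mono
    (integrable_box (square (S-1)) (measurableSet_square (S-1)) S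
      (fun x hx => by
        rw [mem_square_iff] at hx ⊢
        exact ⟨by linarith [hx.1], by linarith [hx.2]⟩) 0 (2*π))
    (integrable_Dfull hc S)
    (fun z => ind_mono (fun h => by
      rcases h with ⟨h1, h2⟩
      rw [mem_square_iff] at h1
      refine ⟨h2, ?_, ?_⟩
      · rw [mem_square_iff]; exact ⟨by linarith [h1.1], by linarith [h1.2]⟩
      · rw [mem_square_iff]
        constructor
        · calc |(z.1 + dir z.2) 0| = |z.1 0 + dir z.2 0| := by rw [plane_add_apply]
            _ ≤ |z.1 0| + |dir z.2 0| := abs_add_le _ _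
            _ ≤ (S-1) + 1 := add_le_add h1.1 (abs_dir_apply z.2 0)
            _ = S := by ring
        · calc |(z.1 + dir z.2) 1| = |z.1 1 + dir z.2 1| := by rw [plane_add_apply]
            _ ≤ |z.1 1| + |dir z.2 1| := abs_add_le _ _
            _ ≤ (S-1) + 1 := add_le_add h1.2 (abs_dir_apply z.2 1)
            _ = S := by ring))
  rw [integral_ind_box (square (S-1)) (measurableSet_square (S-1)) (by positivity)] at h
  calc 4*(S-1)^2 * (2*π) = (volume (square (S-1))).toReal * (2*π - 0) := by
        rw [vol_square_toReal (by linarith)]; ring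
    _ ≤ Dfull c S := h
end D
noncomputable section E
variable {k : ℕ} {c : Plane → Fin k}

lemma measurable_ind {α : Type*} [MeasurableSpace α] {Q : α → Prop}
    (hm : MeasurableSet {z | Q z}) : Measurable (fun z => ind (Q z)) := by
  have : (fun z => ind (Q z)) = Set.indicator {z | Q z} (fun _ => (1:ℝ)) := by
    funext z; rw [indicator_eq_ind]; rfl
  rw [this]
  exact measurable_const.indicator hm

lemma iterated_to_prod {Q : Plane × ℝ → Prop} (hm : MeasurableSet {z | Q z}) (S : ℝ) :
    (∫ a in square S, ∫ θ in Set.Ioc 0 (2*π), ind (Q (a, θ)))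
      = ∫ z : Plane × ℝ, ind (z.2 ∈ Set.Ioc 0 (2*π) ∧ z.1 ∈ square S ∧ Q z)
          ∂((volume : Measure Plane).prod volume) := by
  have hst : MeasurableSet (square S ×ˢ Set.Ioc 0 (2*π)) :=
    (measurableSet_square S).prod measurableSet_Ioc
  have hint : Integrable (fun z : Plane × ℝ => ind (Q z))
      ((volume.restrict (square S)).prod (volume.restrict (Set.Ioc 0 (2*π)))) := by
    rw [Measure.prod_restrict]
    apply Measure.integrableOn_of_bounded (M := 1)
    · rw [Measure.prod_prod]
      exact (ENNReal.mul_lt_top (volume_square_lt_top S)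
        (by rw [Real.volume_Ioc]; exact ENNReal.ofReal_lt_top)).ne
    · exact (measurable_ind hm).aestronglyMeasurable
    · filter_upwards with z
      rw [Real.norm_eq_abs, abs_of_nonneg (ind_nonneg _)]
      exact ind_le_one _
  calc (∫ a in square S, ∫ θ in Set.Ioc 0 (2*π), ind (Q (a, θ)))
      = ∫ z : Plane × ℝ, ind (Q z)
          ∂((volume.restrict (square S)).prod (volume.restrict (Set.Ioc 0 (2*π)))) :=
        (MeasureTheory.integral_prod _ hint).symm
    _ = ∫ z : Plane × ℝ, ind (Q z)
          ∂(((volume : Measure Plane).prod volume).restrict (square S ×ˢ Set.Ioc 0 (2*π))) := by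
        rw [Measure.prod_restrict]
    _ = ∫ z : Plane × ℝ, Set.indicator (square S ×ˢ Set.Ioc 0 (2*π)) (fun z => ind (Q z)) z
          ∂((volume : Measure Plane).prod volume) := (integral_indicator hst).symm
    _ = ∫ z : Plane × ℝ, ind (z.2 ∈ Set.Ioc 0 (2*π) ∧ z.1 ∈ square S ∧ Q z)
          ∂((volume : Measure Plane).prod volume) := by
        congr 1
        funext z
        rw [indicator_mul_eq, ind_mul_ind]
        exact ind_congr (by simp [Set.mem_prod]; tauto)

lemma ptable_eq (hc : Measurable c) (S : ℝ) : ptable c S = Nfull c S / Dfull c S := by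
  have h2π : (0:ℝ) ≤ 2*π := by positivity
  have hnum := iterated_to_prod
    (Q := fun z : Plane × ℝ => c z.1 = c (z.1 + dir z.2) ∧ z.1 + dir z.2 ∈ square S)
    ((measurableSet_colorEq hc measurable_fst measurable_m1).inter
      (measurable_m1 (measurableSet_square S))) S
  have hden := iterated_to_prod
    (Q := fun z : Plane × ℝ => z.1 + dir z.2 ∈ square S)
    (measurable_m1 (measurableSet_square S)) S
  rw [ptable, ptableSet, Nfull, Dfull, ← hnum, ← hden]
  simp only [intervalIntegral.integral_of_le h2π]
  simp only [ind]
  congr!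
end E
noncomputable section F
variable {k : ℕ} {c : Plane → Fin k}

lemma abs_add_cancel {x y : ℝ} : |x| ≤ |x + y| + |y| := by
  have h := abs_sub (x + y) y
  simpa using h

lemma mem_square_add {x y : Plane} {R M : ℝ} (hx : x ∈ square R)
    (hy0 : |y 0| ≤ M) (hy1 : |y 1| ≤ M) : x + y ∈ square (R + M) := by
  rw [mem_square_iff] at hx ⊢
  constructor
  · calc |(x + y) 0| = |x 0 + y 0| := by rw [plane_add_apply]
      _ ≤ |x 0| + |y 0| := abs_add_le _ _
      _ ≤ R + M := add_le_add hx.1 hy0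
  · calc |(x + y) 1| = |x 1 + y 1| := by rw [plane_add_apply]
      _ ≤ |x 1| + |y 1| := abs_add_le _ _
      _ ≤ R + M := add_le_add hx.2 hy1

lemma measurable_m4 (φ : ℝ) :
    Measurable (fun w : Plane × ℝ => w.1 + dir (w.2 + φ)) :=
  (continuous_fst.add (continuous_dir.comp (continuous_snd.add continuous_const))).measurable

lemma shift_periodic_integral (Q : ℝ → Prop) (hper : ∀ ψ, Q (ψ + 2*π) ↔ Q ψ) (φ : ℝ) :
    (∫ θ : ℝ, ind (θ ∈ Set.Ioc 0 (2*π) ∧ Q (θ + φ)))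
      = ∫ θ : ℝ, ind (θ ∈ Set.Ioc 0 (2*π) ∧ Q θ) := by
  have hQper : Function.Periodic (fun ψ => ind (Q ψ)) (2*π) := fun ψ => ind_congr (hper ψ)
  have h2π : (0:ℝ) < 2*π := by positivity
  have key : ∀ u v : ℝ, (∫ θ : ℝ, ind (θ ∈ Set.Ioc u (u + 2*π) ∧ Q θ))
      = ∫ θ in u..(u + 2*π), ind (Q θ) := by
    intro u v
    rw [intervalIntegral.integral_of_le (by linarith)]
    rw [← MeasureTheory.integral_indicator measurableSet_Ioc]
    congr 1
    funext θ
    rw [indicator_mul_eq, ind_mul_ind]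
  calc (∫ θ : ℝ, ind (θ ∈ Set.Ioc 0 (2*π) ∧ Q (θ + φ)))
      = ∫ θ : ℝ, (fun ψ => ind (ψ ∈ Set.Ioc φ (φ + 2*π) ∧ Q ψ)) (θ + φ) := by
        congr 1
        funext θ
        exact ind_congr (by rw [Set.mem_Ioc, Set.mem_Ioc]; constructor <;> rintro ⟨⟨h1, h2⟩, h3⟩
          <;> exact ⟨⟨by linarith, by linarith⟩, h3⟩)
    _ = ∫ ψ : ℝ, ind (ψ ∈ Set.Ioc φ (φ + 2*π) ∧ Q ψ) :=
        MeasureTheory.integral_add_right_eq_self (μ := (volume : Measure ℝ))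
          (fun ψ => ind (ψ ∈ Set.Ioc φ (φ + 2*π) ∧ Q ψ)) φ
    _ = ∫ θ in φ..(φ + 2*π), ind (Q θ) := key φ φ
    _ = ∫ θ in (0:ℝ)..(0 + 2*π), ind (Q θ) := hQper.intervalIntegral_add_eq φ 0
    _ = ∫ θ : ℝ, ind (θ ∈ Set.Ioc 0 (0 + 2*π) ∧ Q θ) := (key 0 0).symm
    _ = ∫ θ : ℝ, ind (θ ∈ Set.Ioc 0 (2*π) ∧ Q θ) := by rw [zero_add]

lemma edge_bound (hc : Measurable c) (v : Plane) (φ : ℝ) {R M : ℝ} (hR : 0 ≤ R) (hM : 0 ≤ M)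
    (hv : |v 0| + |v 1| ≤ M) :
    (∫ z : Plane × ℝ, ind (z.1 ∈ square R ∧ z.2 ∈ Set.Ioc 0 (2*π) ∧
        c (z.1 + rot z.2 v) = c (z.1 + rot z.2 v + dir (z.2 + φ)))
      ∂((volume : Measure Plane).prod volume)) ≤ Nfull c (R + M + 1) := by
  set S := R + M + 1 with hS
  set F : Plane × ℝ → ℝ := fun w => ind (w.2 ∈ Set.Ioc 0 (2*π) ∧ w.1 ∈ square S ∧
    c w.1 = c (w.1 + dir (w.2 + φ)) ∧ w.1 + dir (w.2 + φ) ∈ square S) with hF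
  -- integrability of F
  have hFmeas : MeasurableSet {w : Plane × ℝ | w.2 ∈ Set.Ioc 0 (2*π) ∧ w.1 ∈ square S ∧
      c w.1 = c (w.1 + dir (w.2 + φ)) ∧ w.1 + dir (w.2 + φ) ∈ square S} := by
    apply MeasurableSet.inter (measurable_snd measurableSet_Ioc)
    apply MeasurableSet.inter (measurable_fst (measurableSet_square S))
    exact (measurableSet_colorEq hc measurable_fst (measurable_m4 φ)).inter
      ((measurable_m4 φ) (measurableSet_square S))
  have hFint : Integrable F ((volume : Measure Plane).prod volume) := by
    apply integrable_ind hFmeas S 0 (2*π)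
    rintro w ⟨h1, h2, -⟩
    exact ⟨h2, Set.Ioc_subset_Icc_self h1⟩
  -- integrability of F composed with the skew translation
  have hGmeas : MeasurableSet {z : Plane × ℝ | z.2 ∈ Set.Ioc 0 (2*π) ∧
      z.1 + rot z.2 v ∈ square S ∧
      c (z.1 + rot z.2 v) = c (z.1 + rot z.2 v + dir (z.2 + φ)) ∧
      z.1 + rot z.2 v + dir (z.2 + φ) ∈ square S} := by
    apply MeasurableSet.inter (measurable_snd measurableSet_Ioc)
    apply MeasurableSet.inter ((measurable_m2 v) (measurableSet_square S))
    exact (measurableSet_colorEq hc (measurable_m2 v) (measurable_m3 v φ)).inter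
      ((measurable_m3 v φ) (measurableSet_square S))
  have hGint : Integrable (fun z : Plane × ℝ => F (z.1 + rot z.2 v, z.2))
      ((volume : Measure Plane).prod volume) := by
    apply integrable_ind hGmeas (S + M) 0 (2*π)
    rintro z ⟨h1, h2, -⟩
    refine ⟨?_, Set.Ioc_subset_Icc_self h1⟩
    rw [mem_square_iff] at h2 ⊢
    constructor
    · calc |z.1 0| ≤ |z.1 0 + rot z.2 v 0| + |rot z.2 v 0| := abs_add_cancel
        _ ≤ S + M := add_le_add (by rw [← plane_add_apply]; exact h2.1)
            (le_trans (abs_rot_apply z.2 v 0) (by linarith))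
    · calc |z.1 1| ≤ |z.1 1 + rot z.2 v 1| + |rot z.2 v 1| := abs_add_cancel
        _ ≤ S + M := add_le_add (by rw [← plane_add_apply]; exact h2.2)
            (le_trans (abs_rot_apply z.2 v 1) (by linarith))
  -- integrability of LHS integrand
  have hLmeas : MeasurableSet {z : Plane × ℝ | z.1 ∈ square R ∧ z.2 ∈ Set.Ioc 0 (2*π) ∧
      c (z.1 + rot z.2 v) = c (z.1 + rot z.2 v + dir (z.2 + φ))} := by
    apply MeasurableSet.inter (measurable_fst (measurableSet_square R))
    exact (measurable_snd measurableSet_Ioc).inter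
      (measurableSet_colorEq hc (measurable_m2 v) (measurable_m3 v φ))
  have hLint : Integrable (fun z : Plane × ℝ => ind (z.1 ∈ square R ∧ z.2 ∈ Set.Ioc 0 (2*π) ∧
      c (z.1 + rot z.2 v) = c (z.1 + rot z.2 v + dir (z.2 + φ))))
      ((volume : Measure Plane).prod volume) := by
    apply integrable_ind hLmeas R 0 (2*π)
    rintro z ⟨h1, h2, -⟩
    exact ⟨h1, Set.Ioc_subset_Icc_self h2⟩
  -- step 1 : pointwise bound
  have step1 : (∫ z : Plane × ℝ, ind (z.1 ∈ square R ∧ z.2 ∈ Set.Ioc 0 (2*π) ∧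
        c (z.1 + rot z.2 v) = c (z.1 + rot z.2 v + dir (z.2 + φ)))
      ∂((volume : Measure Plane).prod volume))
      ≤ ∫ z : Plane × ℝ, F (z.1 + rot z.2 v, z.2)
          ∂((volume : Measure Plane).prod volume) := by
    apply integral_mono hLint hGint
    intro z
    apply ind_mono
    rintro ⟨h1, h2, h3⟩
    have hb : z.1 + rot z.2 v ∈ square (R + M) :=
      mem_square_add h1 (le_trans (abs_rot_apply z.2 v 0) (by linarith))
        (le_trans (abs_rot_apply z.2 v 1) (by linarith))
    refine ⟨h2, ?_, h3, ?_⟩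
    · rw [mem_square_iff] at hb ⊢
      exact ⟨le_trans hb.1 (by rw [hS]; linarith), le_trans hb.2 (by rw [hS]; linarith)⟩
    · have := mem_square_add hb (abs_dir_apply (z.2 + φ) 0) (abs_dir_apply (z.2 + φ) 1)
      rwa [hS]
  -- step 2 : translation invariance in the plane coordinate
  have step2 : (∫ z : Plane × ℝ, F (z.1 + rot z.2 v, z.2)
      ∂((volume : Measure Plane).prod volume))
      = ∫ z : Plane × ℝ, F z ∂((volume : Measure Plane).prod volume) := by
    rw [MeasureTheory.integral_prod_symm _ hGint, MeasureTheory.integral_prod_symm _ hFint]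
    congr 1
    funext θ
    exact MeasureTheory.integral_add_right_eq_self (fun a => F (a, θ)) (rot θ v)
  -- step 3 : rotation of the angular window by periodicity
  have step3 : (∫ z : Plane × ℝ, F z ∂((volume : Measure Plane).prod volume))
      = Nfull c S := by
    rw [MeasureTheory.integral_prod _ hFint, Nfull,
      MeasureTheory.integral_prod _ (integrable_Nfull hc S)]
    congr 1
    funext a
    have := shift_periodic_integral
      (fun ψ => a ∈ square S ∧ c a = c (a + dir ψ) ∧ a + dir ψ ∈ square S)
      (fun ψ => by simp only [dir_periodic ψ]) φ
    exact this
  calc _ ≤ _ := step1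
    _ = _ := step2
    _ = Nfull c S := step3
end F
noncomputable section G
variable {k : ℕ} {c : Plane → Fin k}

lemma edge_piece (hc : Measurable c) {R M : ℝ} (hR : 0 ≤ R) (hM : 0 ≤ M)
    (vi vj : Plane) (hvi : |vi 0| + |vi 1| ≤ M) (hdist : ‖vj - vi‖ = 1) :
    Integrable (fun z : Plane × ℝ => ind (z.1 ∈ square R ∧ z.2 ∈ Set.Ioc 0 (2*π) ∧
        c (z.1 + rot z.2 vi) = c (z.1 + rot z.2 vj)))
      ((volume : Measure Plane).prod volume) ∧
    (∫ z : Plane × ℝ, ind (z.1 ∈ square R ∧ z.2 ∈ Set.Ioc 0 (2*π) ∧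
        c (z.1 + rot z.2 vi) = c (z.1 + rot z.2 vj))
      ∂((volume : Measure Plane).prod volume)) ≤ Nfull c (R + M + 1) := by
  obtain ⟨φ, hφ⟩ := exists_angle hdist
  have hvj : vj = vi + dir φ := by rw [hφ]; abel
  have heq : (fun z : Plane × ℝ => ind (z.1 ∈ square R ∧ z.2 ∈ Set.Ioc 0 (2*π) ∧
        c (z.1 + rot z.2 vi) = c (z.1 + rot z.2 vj)))
      = (fun z : Plane × ℝ => ind (z.1 ∈ square R ∧ z.2 ∈ Set.Ioc 0 (2*π) ∧
        c (z.1 + rot z.2 vi) = c (z.1 + rot z.2 vi + dir (z.2 + φ)))) := by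
    funext z
    apply ind_congr
    apply and_congr_right
    intro _
    apply and_congr_right
    intro _
    rw [hvj, rot_add, rot_dir, ← add_assoc]
  constructor
  · rw [heq]
    apply integrable_ind
      (((measurable_fst (measurableSet_square R)).inter
        ((measurable_snd measurableSet_Ioc).inter
          (measurableSet_colorEq hc (measurable_m2 vi) (measurable_m3 vi φ))))) R 0 (2*π)
    rintro z ⟨h1, h2, -⟩
    exact ⟨h1, Set.Ioc_subset_Icc_self h2⟩
  · rw [heq]
    exact edge_bound hc vi φ hR hM hvi

lemma diag_iff {V : Type} {k : ℕ} (χ : V → Fin k) {e : Sym2 V} {i j : V}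
    (h : s(i,j) = e) : (Sym2.map χ e).IsDiag ↔ χ i = χ j := by
  subst h
  rw [Sym2.map_pair_eq, Sym2.mk_isDiag_iff]

open Classical in
lemma monoCount_cast {V : Type} [Fintype V] {k : ℕ} (G : SimpleGraph V) (χ : V → Fin k) :
    (monoCount G χ : ℝ) = ∑ e ∈ G.edgeFinset, ind ((Sym2.map χ e).IsDiag) := by
  classical
  rw [monoCount, Finset.card_filter]
  push_cast
  apply Finset.sum_congr rfl
  intro e _
  by_cases h : (Sym2.map χ e).IsDiag <;> simp [h, ind]

lemma mval_nonneg {V : Type} [Fintype V] (k : ℕ) (hk : 2 ≤ k) (G : SimpleGraph V) :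
    0 ≤ mval k G := by
  haveI : Nonempty (V → Fin k) := ⟨fun _ => ⟨0, by omega⟩⟩
  exact le_ciInf fun χ => by positivity

open Classical in
lemma mval_le {V : Type} [Fintype V] (k : ℕ) (hk : 2 ≤ k) (G : SimpleGraph V) (χ : V → Fin k) :
    mval k G * (G.edgeFinset.card : ℝ) ≤ (monoCount G χ : ℝ) := by
  haveI : Nonempty (V → Fin k) := ⟨fun _ => ⟨0, by omega⟩⟩
  by_cases hcard : (G.edgeFinset.card : ℝ) = 0
  · rw [hcard, mul_zero]
    positivity
  · have hpos : (0:ℝ) < (G.edgeFinset.card : ℝ) :=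
      lt_of_le_of_ne (Nat.cast_nonneg _) (Ne.symm hcard)
    have h1 : mval k G ≤ (monoCount G χ : ℝ) / (G.edgeFinset.card : ℝ) := by
      apply ciInf_le
      refine ⟨0, ?_⟩
      rintro x ⟨χ', rfl⟩
      positivity
    calc mval k G * (G.edgeFinset.card : ℝ)
        ≤ ((monoCount G χ : ℝ) / (G.edgeFinset.card : ℝ)) * (G.edgeFinset.card : ℝ) :=
          mul_le_mul_of_nonneg_right h1 hpos.le
      _ = (monoCount G χ : ℝ) := div_mul_cancel₀ _ hcard
end G

/-- Left-hand inequality of Theorem 2: for every finite unit-distance graph `G` with at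
least one edge and every asymptotic `k`-coloring `c` of the plane (with asymptotic
probability `p`), `m_k(G) ≤ p(c)`. -/
theorem stmt3 (k : ℕ) (hk : 2 ≤ k) {V : Type} [Fintype V] (G : SimpleGraph V)
    (hE : G.edgeSet.Nonempty)
    (hUD : ∃ f : V → Plane, ∀ i j : V, G.Adj i j → dist (f i) (f j) = 1)
    (c : Plane → Fin k) (hc : Measurable c) (p : ℝ)
    (hp : Filter.Tendsto (fun R : ℝ => ptable c R) Filter.atTop (nhds p)) :
    mval k G ≤ p := by
  classical
  obtain ⟨f, hf⟩ := hUD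
  set M : ℝ := ∑ i : V, (|f i 0| + |f i 1|) with hMdef
  have hM : 0 ≤ M := Finset.sum_nonneg fun i _ => by positivity
  have hfM : ∀ i : V, |f i 0| + |f i 1| ≤ M := fun i =>
    Finset.single_le_sum (f := fun i => |f i 0| + |f i 1|) (fun j _ => by positivity)
      (Finset.mem_univ i)
  obtain ⟨e₀, he₀⟩ := hE
  have hE' : e₀ ∈ G.edgeFinset := SimpleGraph.mem_edgeFinset.2 he₀
  have hcardR : (0:ℝ) < (G.edgeFinset.card : ℝ) := by
    exact_mod_cast Finset.card_pos.2 ⟨e₀, hE'⟩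
  have key : ∀ R : ℝ, 1 ≤ R →
      mval k G ≤ ptable c (R + M + 1) * ((R + M + 1)^2 / R^2) := by
    intro R hR1
    have hR : (0:ℝ) ≤ R := by linarith
    have hR0 : (0:ℝ) < R := by linarith
    -- per-edge integrand
    set Φ : Sym2 V → Plane × ℝ → ℝ := fun e z =>
      ind (z.1 ∈ square R ∧ z.2 ∈ Set.Ioc 0 (2*π) ∧
        (Sym2.map (fun i => c (z.1 + rot z.2 (f i))) e).IsDiag) with hΦ
    have hedge : ∀ e ∈ G.edgeFinset,
        Integrable (Φ e) ((volume : Measure Plane).prod volume) ∧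
        (∫ z : Plane × ℝ, Φ e z ∂((volume : Measure Plane).prod volume))
          ≤ Nfull c (R + M + 1) := by
      intro e he
      obtain ⟨i, j, hij⟩ : ∃ i j : V, s(i,j) = e :=
        Sym2.inductionOn e (fun x y => ⟨x, y, rfl⟩)
      have hadj : G.Adj i j := by
        have := SimpleGraph.mem_edgeFinset.1 he
        rw [← hij, SimpleGraph.mem_edgeSet] at this
        exact this
      have hdist : ‖f j - f i‖ = 1 := by
        rw [norm_sub_rev, ← dist_eq_norm]
        exact hf i j hadj
      have hpiece := edge_piece (c := c) hc hR hM (f i) (f j) (hfM i) hdist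
      have heq : Φ e = (fun z : Plane × ℝ => ind (z.1 ∈ square R ∧ z.2 ∈ Set.Ioc 0 (2*π) ∧
          c (z.1 + rot z.2 (f i)) = c (z.1 + rot z.2 (f j)))) := by
        funext z
        exact ind_congr (and_congr_right fun _ => and_congr_right fun _ =>
          diag_iff (fun i => c (z.1 + rot z.2 (f i))) hij)
      rw [heq]
      exact hpiece
    have hdomint := integrable_box (square R) (measurableSet_square R) R (fun _ h => h) 0 (2*π)
    have hsumint : Integrable (fun z : Plane × ℝ => ∑ e ∈ G.edgeFinset, Φ e z)
        ((volume : Measure Plane).prod volume) :=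
      integrable_finset_sum _ (fun e he => (hedge e he).1)
    set C : ℝ := mval k G * (G.edgeFinset.card : ℝ) with hC
    have hpoint : ∀ z : Plane × ℝ,
        C * ind (z.1 ∈ square R ∧ z.2 ∈ Set.Ioc 0 (2*π)) ≤ ∑ e ∈ G.edgeFinset, Φ e z := by
      intro z
      by_cases hdom : z.1 ∈ square R ∧ z.2 ∈ Set.Ioc 0 (2*π)
      · rw [ind_true hdom, mul_one]
        have h1 : ∀ e ∈ G.edgeFinset, Φ e z =
            ind ((Sym2.map (fun i => c (z.1 + rot z.2 (f i))) e).IsDiag) := fun e _ =>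
          ind_congr ⟨fun h => h.2.2, fun h => ⟨hdom.1, hdom.2, h⟩⟩
        rw [Finset.sum_congr rfl h1, ← monoCount_cast G (fun i => c (z.1 + rot z.2 (f i)))]
        exact mval_le k hk G _
      · have h0 : ind (z.1 ∈ square R ∧ z.2 ∈ Set.Ioc 0 (2*π)) = 0 := by
          unfold ind; rw [if_neg hdom]
        rw [h0, mul_zero]
        exact Finset.sum_nonneg fun e _ => ind_nonneg _
    have hA : C * ((volume (square R)).toReal * (2*π - 0))
        ≤ ∑ e ∈ G.edgeFinset, ∫ z : Plane × ℝ, Φ e z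
            ∂((volume : Measure Plane).prod volume) := by
      have h1 : C * ((volume (square R)).toReal * (2*π - 0))
          = ∫ z : Plane × ℝ, C * ind (z.1 ∈ square R ∧ z.2 ∈ Set.Ioc 0 (2*π))
              ∂((volume : Measure Plane).prod volume) := by
        rw [MeasureTheory.integral_const_mul,
          integral_ind_box (square R) (measurableSet_square R) (by positivity)]
      rw [h1, ← MeasureTheory.integral_finset_sum _ (fun e he => (hedge e he).1)]
      exact integral_mono (hdomint.const_mul C) hsumint hpoint
    have hB : (∑ e ∈ G.edgeFinset, ∫ z : Plane × ℝ, Φ e z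
          ∂((volume : Measure Plane).prod volume))
        ≤ (G.edgeFinset.card : ℝ) * Nfull c (R + M + 1) := by
      calc (∑ e ∈ G.edgeFinset, ∫ z : Plane × ℝ, Φ e z
            ∂((volume : Measure Plane).prod volume))
          ≤ ∑ _e ∈ G.edgeFinset, Nfull c (R + M + 1) :=
            Finset.sum_le_sum fun e he => (hedge e he).2
        _ = (G.edgeFinset.card : ℝ) * Nfull c (R + M + 1) := by
            rw [Finset.sum_const, nsmul_eq_mul]
    have hAB : mval k G * (4*R^2*(2*π)) ≤ Nfull c (R + M + 1) := by
      apply le_of_mul_le_mul_right _ hcardR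
      calc mval k G * (4*R^2*(2*π)) * (G.edgeFinset.card : ℝ)
          = C * ((volume (square R)).toReal * (2*π - 0)) := by
            rw [hC, vol_square_toReal hR]; ring
        _ ≤ (G.edgeFinset.card : ℝ) * Nfull c (R + M + 1) := le_trans hA hB
        _ = Nfull c (R + M + 1) * (G.edgeFinset.card : ℝ) := by ring
    have hS1 : 1 ≤ R + M + 1 := by linarith
    have hDpos : 0 < Dfull c (R + M + 1) := by
      have h1 : (0:ℝ) < 4*(R + M + 1 - 1)^2 * (2*π) := by
        have h2 : (1:ℝ) ≤ R + M + 1 - 1 := by linarith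
        exact mul_pos (by nlinarith : (0:ℝ) < 4*(R + M + 1 - 1)^2)
          (by positivity : (0:ℝ) < 2*π)
      exact lt_of_lt_of_le h1 (Dfull_ge hc hS1)
    have hptable : ptable c (R + M + 1) = Nfull c (R + M + 1) / Dfull c (R + M + 1) :=
      ptable_eq hc (R + M + 1)
    have hNf : Nfull c (R + M + 1) = ptable c (R + M + 1) * Dfull c (R + M + 1) := by
      rw [hptable, div_mul_cancel₀ _ (ne_of_gt hDpos)]
    have hpt0 : 0 ≤ ptable c (R + M + 1) := by
      rw [hptable]
      exact div_nonneg (Nfull_nonneg _) (Dfull_nonneg _)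
    have hfinal : mval k G * (4*R^2*(2*π)) ≤ ptable c (R + M + 1) * (4*(R + M + 1)^2*(2*π)) := by
      calc mval k G * (4*R^2*(2*π)) ≤ Nfull c (R + M + 1) := hAB
        _ = ptable c (R + M + 1) * Dfull c (R + M + 1) := hNf
        _ ≤ ptable c (R + M + 1) * (4*(R + M + 1)^2*(2*π)) :=
            mul_le_mul_of_nonneg_left (Dfull_le hc (by linarith)) hpt0
    have hden : (0:ℝ) < 4*R^2*(2*π) := by positivity
    have h2 : mval k G ≤ ptable c (R + M + 1) * (4*(R + M + 1)^2*(2*π)) / (4*R^2*(2*π)) :=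
      (le_div_iff₀ hden).2 hfinal
    calc mval k G ≤ _ := h2
      _ = ptable c (R + M + 1) * ((R + M + 1)^2 / R^2) := by
        field_simp
  -- pass to the limit
  have htend1 : Filter.Tendsto (fun R : ℝ => ptable c (R + M + 1)) Filter.atTop (nhds p) := by
    apply hp.comp
    apply Filter.tendsto_atTop_add_const_right
    apply Filter.tendsto_atTop_add_const_right
    exact Filter.tendsto_id
  have htend2 : Filter.Tendsto (fun R : ℝ => (R + M + 1)^2 / R^2) Filter.atTop (nhds 1) := by
    have h3 : Filter.Tendsto (fun R : ℝ => (R + M + 1) / R) Filter.atTop (nhds 1) := by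
      have h4 : Filter.Tendsto (fun R : ℝ => 1 + (M + 1) / R) Filter.atTop (nhds 1) := by
        have := Filter.Tendsto.div_atTop (tendsto_const_nhds (x := M + 1))
          (Filter.tendsto_id (α := ℝ))
        have h5 := (tendsto_const_nhds (x := (1:ℝ))).add this
        simpa using h5
      apply h4.congr'
      filter_upwards [Filter.eventually_ge_atTop (1:ℝ)] with R hR
      have hR0 : R ≠ 0 := by intro h; rw [h] at hR; linarith
      field_simp
      ring
    have := h3.pow 2
    simp only [one_pow] at this
    apply this.congr
    intro R
    rw [div_pow]
  have htend : Filter.Tendsto (fun R : ℝ => ptable c (R + M + 1) * ((R + M + 1)^2 / R^2))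
      Filter.atTop (nhds p) := by
    have := htend1.mul htend2
    simpa using this
  apply ge_of_tendsto htend
  filter_upwards [Filter.eventually_ge_atTop (1:ℝ)] with R hR
  exact key R hR

end
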